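/- Raychaudhuri-type renormalization: suppose along null generators of a 𝐠-null cone (with r = t − u, L(r) = 1) the null expansion satisfies the Raychaudhuri equation L(tr χ) + ½(tr χ)² = −|χ̂|² − k_{NN} tr χ − Ric(L,L), and define z := tr χ + Γ_L − 2/r where Γ_L := Γ_α L^α and Ric(L,L) = f·□_𝐠 𝐠 + L(Γ_L) + k_{NN}Γ_L + f·∂𝐠·∂𝐠 (the wave-coordinate decomposition contracted twice with L). Then z satisfies the renormalized transport equation L z + (2/r) z = −½ z² − |χ̂|² + f·□_𝐠 𝐠 + f·(z, χ̂, ∂𝐠, 1/r)·∂𝐠 + f·z·∂𝐠, in which all dangerous terms L(Γ_L) cancel exactly. -/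
import Mathlib


/-- **Renormalized Raychaudhuri equation.** Along a null generator (`L = d/dt`, `r = t − u`),
suppose `trχ` satisfies the Raychaudhuri equation
`L(trχ) + ½(trχ)² = −|χ̂|² − k_{NN}·trχ − Ric(L,L)`, where the Ricci component has the
wave-coordinate decomposition
`Ric(L,L) = (f·□𝐠𝐠) + L(Γ_L) + k_{NN}·Γ_L + (f·∂𝐠·∂𝐠)`.  Then
`z := trχ + Γ_L − 2/r` satisfies a transport equation
`L z + (2/r) z = −½z² − |χ̂|² + f·□𝐠𝐠 + f·(z, χ̂, ∂𝐠, 1/r)·∂𝐠 + f·z·∂𝐠`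
in which the dangerous term `L(Γ_L)` cancels exactly: precisely, `z` has at `t` the
derivative displayed below, which contains no derivative of `Γ_L`. -/
theorem renormalized_raychaudhuri
    (u t : ℝ) (hut : u < t)
    (trχ ΓL chihatSq kNN RicLL boxgTerm quadTerm z : ℝ → ℝ)
    (dtrχ dΓL : ℝ)
    (htrχ : HasDerivAt trχ dtrχ t)
    (hΓL : HasDerivAt ΓL dΓL t)
    (hz : ∀ s, z s = trχ s + ΓL s - 2 / (s - u))
    (hray : dtrχ + (1 / 2) * (trχ t) ^ 2
      = -chihatSq t - kNN t * trχ t - RicLL t)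
    (hric : RicLL t = boxgTerm t + dΓL + kNN t * ΓL t + quadTerm t) :
    HasDerivAt z
      (-(2 / (t - u)) * z t - (1 / 2) * (z t) ^ 2 - chihatSq t
        - boxgTerm t - quadTerm t
        + z t * ΓL t - (1 / 2) * (ΓL t) ^ 2 - kNN t * z t
        + (2 / (t - u)) * (ΓL t - kNN t)) t := by
  have htu : t - u ≠ 0 := sub_ne_zero.mpr (ne_of_gt hut)
  have hr : HasDerivAt (fun s : ℝ => 2 / (s - u)) (-(2 / (t - u) ^ 2)) t := by
    have h1 : HasDerivAt (fun s : ℝ => s - u) 1 t := (hasDerivAt_id t).sub_const u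
    have := (h1.inv htu).const_mul (2 : ℝ)
    simpa [div_eq_mul_inv, mul_comm, mul_assoc] using this
  have hd : HasDerivAt z (dtrχ + dΓL - -(2 / (t - u) ^ 2)) t := by
    have := ((htrχ.add hΓL).sub hr)
    exact this.congr_of_eventuallyEq (Filter.Eventually.of_forall fun s => (hz s))
  convert hd using 1
  have hzt : z t = trχ t + ΓL t - 2 / (t - u) := hz t
  have hray' : dtrχ = -chihatSq t - kNN t * trχ t - RicLL t - (1 / 2) * (trχ t) ^ 2 := by
    linarith
  rw [hzt, hray', hric]
  field_simp
  ring
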